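/- arXiv:cs/0506104 — 2 statements merged into one kernel-verified Lean document; each statement's English description precedes it below -/
import Mathlib

section
/- Let T be a CNF theory, L ⊆ Lit(T), and X ⊆ At(T) a set of atoms consistent with L. If X is a minimal model of T, then X \ L⁺ is a minimal model of T_L. -/
open Classical

/-- A literal: `(true, a)` is the atom `a`, `(false, a)` is the negated atom `¬ a`. -/
abbrev Lit : Type := Bool × ℕ

/-- A clause: a finite set of literals, viewed as the disjunction of its literals. -/
abbrev Clause : Type := Finset Lit

/-- A CNF theory: a finite set of clauses. -/
abbrev CTheory : Type := Finset Clause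

/-- A clause is proper: it contains no atom together with its negation. -/
def Clause.ok (c : Clause) : Prop :=
  ∀ a : ℕ, ¬ (((true, a) : Lit) ∈ c ∧ ((false, a) : Lit) ∈ c)

/-- The set of atoms occurring in a clause. -/
def clauseAtoms (c : Clause) : Finset ℕ := c.image Prod.snd

/-- `At(T)`: the set of atoms occurring in a CNF theory. -/
def thAtoms (T : CTheory) : Finset ℕ := T.sup clauseAtoms

/-- A set of atoms `M` satisfies a literal `l`. -/
def satLit (M : Finset ℕ) (l : Lit) : Prop := if l.1 then l.2 ∈ M else l.2 ∉ M

/-- `M` is a model of the CNF theory `T`. -/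
def isModel (M : Finset ℕ) (T : CTheory) : Prop := ∀ c ∈ T, ∃ l ∈ c, satLit M l

/-- `M` is a minimal model of `T`: a model `M ⊆ At(T)` no proper subset of which is a model. -/
def isMinModel (M : Finset ℕ) (T : CTheory) : Prop :=
  isModel M T ∧ M ⊆ thAtoms T ∧ ∀ M' : Finset ℕ, M' ⊂ M → ¬ isModel M' T

/-- The dual of a literal. -/
def litNeg (l : Lit) : Lit := (!l.1, l.2)

/-- `L̄`: the set of duals of the literals of `L`. -/
def negSet (L : Finset Lit) : Finset Lit := L.image litNeg

/-- `L⁺`: the set of atoms belonging to `L`. -/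
def posAtoms (L : Finset Lit) : Finset ℕ := (L.filter (fun l => l.1 = true)).image Prod.snd

/-- `L⁻`: the set of atoms whose negation belongs to `L`. -/
def negAtoms (L : Finset Lit) : Finset ℕ := (L.filter (fun l => l.1 = false)).image Prod.snd

/-- A set of atoms `M` is consistent with a set of literals `L` if `L⁺ ⊆ M` and `L⁻ ∩ M = ∅`. -/
def consistentWith (M : Finset ℕ) (L : Finset Lit) : Prop :=
  posAtoms L ⊆ M ∧ ∀ a ∈ negAtoms L, a ∉ M

/-- `Lit(T)`: the set of all literals over the atoms of `T`. -/
def litsOf (T : CTheory) : Finset Lit :=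
  (thAtoms T).image (fun a => ((true, a) : Lit)) ∪
    (thAtoms T).image (fun a => ((false, a) : Lit))

/-- `T_L = {c \ L̄ : c ∈ T, c ∩ L = ∅}`. -/
def reduceTh (T : CTheory) (L : Finset Lit) : CTheory :=
  (T.filter (fun c => ∀ l ∈ c, l ∉ L)).image (fun c => c \ negSet L)


lemma mem_posAtoms (L : Finset Lit) (a : ℕ) : a ∈ posAtoms L ↔ ((true,a):Lit) ∈ L := by
  simp only [posAtoms, Finset.mem_image, Finset.mem_filter]
  constructor
  · rintro ⟨⟨b, n⟩, ⟨hl, hb⟩, rfl⟩; simp only at hb; subst hb; exact hl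
  · intro h; exact ⟨(true,a), ⟨h, rfl⟩, rfl⟩

lemma mem_negAtoms (L : Finset Lit) (a : ℕ) : a ∈ negAtoms L ↔ ((false,a):Lit) ∈ L := by
  simp only [negAtoms, Finset.mem_image, Finset.mem_filter]
  constructor
  · rintro ⟨⟨b, n⟩, ⟨hl, hb⟩, rfl⟩; simp only at hb; subst hb; exact hl
  · intro h; exact ⟨(false,a), ⟨h, rfl⟩, rfl⟩

lemma mem_negSet (L : Finset Lit) (l : Lit) : l ∈ negSet L ↔ litNeg l ∈ L := by
  simp only [negSet, Finset.mem_image]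
  constructor
  · rintro ⟨m, hm, rfl⟩; simpa [litNeg] using hm
  · intro h; exact ⟨litNeg l, h, by simp [litNeg]⟩

lemma mem_thAtoms (T : CTheory) (a : ℕ) :
    a ∈ thAtoms T ↔ ∃ c ∈ T, ∃ l ∈ c, l.2 = a := by
  simp [thAtoms, clauseAtoms, Finset.mem_sup, Finset.mem_image]

lemma mem_reduceTh (T : CTheory) (L : Finset Lit) (c' : Clause) :
    c' ∈ reduceTh T L ↔ ∃ c ∈ T, (∀ l ∈ c, l ∉ L) ∧ c' = c \ negSet L := by
  simp only [reduceTh, Finset.mem_image, Finset.mem_filter]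
  constructor
  · rintro ⟨c, ⟨hc, hdisj⟩, rfl⟩; exact ⟨c, hc, hdisj, rfl⟩
  · rintro ⟨c, hc, hdisj, rfl⟩; exact ⟨c, ⟨hc, hdisj⟩, rfl⟩

/-- Let `T` be a CNF theory, `L ⊆ Lit(T)`, and `X ⊆ At(T)` consistent with `L`.
If `X` is a minimal model of `T`, then `X \ L⁺` is a minimal model of `T_L`. -/
theorem minModel_reduce (T : CTheory) (hok : ∀ c ∈ T, Clause.ok c)
    (L : Finset Lit) (hL : L ⊆ litsOf T)
    (X : Finset ℕ) (hX : X ⊆ thAtoms T) (hcons : consistentWith X L)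
    (hmin : isMinModel X T) :
    isMinModel (X \ posAtoms L) (reduceTh T L) := by
  obtain ⟨hmod, hXat, hminimal⟩ := hmin
  obtain ⟨hpos, hneg⟩ := hcons
  refine ⟨?_, ?_, ?_⟩
  · -- model
    intro c' hc'
    obtain ⟨c, hcT, hdisj, rfl⟩ := (mem_reduceTh T L c').1 hc'
    obtain ⟨l, hlc, hl⟩ := hmod c hcT
    obtain ⟨b, a⟩ := l
    cases b with
    | true =>
      have ha : a ∈ X := by simpa [satLit] using hl
      refine ⟨(true, a), ?_, ?_⟩
      · rw [Finset.mem_sdiff]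
        refine ⟨hlc, fun h => ?_⟩
        rw [mem_negSet] at h
        exact hneg a ((mem_negAtoms L a).2 (by simpa [litNeg] using h)) ha
      · have : a ∉ posAtoms L := fun h => hdisj _ hlc ((mem_posAtoms L a).1 h)
        simp [satLit, Finset.mem_sdiff, ha, this]
    | false =>
      have ha : a ∉ X := by simpa [satLit] using hl
      refine ⟨(false, a), ?_, ?_⟩
      · rw [Finset.mem_sdiff]
        refine ⟨hlc, fun h => ?_⟩
        rw [mem_negSet] at h
        exact ha (hpos ((mem_posAtoms L a).2 (by simpa [litNeg] using h)))
      · simp only [satLit, Finset.mem_sdiff]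
        exact fun h => ha h.1
  · -- subset of atoms
    intro a haX
    rw [Finset.mem_sdiff] at haX
    obtain ⟨haX, haL⟩ := haX
    by_contra hnotat
    -- then X.erase a is a model of T, contradiction
    apply hminimal (X.erase a) (Finset.erase_ssubset haX)
    intro c hcT
    obtain ⟨l, hlc, hl⟩ := hmod c hcT
    by_cases hcL : ∃ m ∈ c, m ∈ L
    · obtain ⟨⟨b, n⟩, hmc, hmL⟩ := hcL
      cases b with
      | true =>
        have hn : n ∈ X := hpos ((mem_posAtoms L n).2 hmL)
        have hna : n ≠ a := fun h => haL (h ▸ (mem_posAtoms L n).2 hmL)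
        exact ⟨(true, n), hmc, by simp [satLit, Finset.mem_erase, hn, hna]⟩
      | false =>
        have hn : n ∉ X := hneg n ((mem_negAtoms L n).2 hmL)
        exact ⟨(false, n), hmc, by simp [satLit, Finset.mem_erase]; exact fun _ => hn⟩
    · push_neg at hcL
      -- c \ negSet L ∈ reduceTh
      have hcred : c \ negSet L ∈ reduceTh T L :=
        (mem_reduceTh T L _).2 ⟨c, hcT, hcL, rfl⟩
      obtain ⟨b, n⟩ := l
      have hna : n ≠ a := by
        intro h; subst h
        apply hnotat
        rw [mem_thAtoms]
        refine ⟨c \ negSet L, hcred, (b, n), ?_, rfl⟩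
        rw [Finset.mem_sdiff]
        refine ⟨hlc, fun hmem => ?_⟩
        rw [mem_negSet] at hmem
        cases b with
        | true =>
          have hn : n ∈ X := by simpa [satLit] using hl
          exact hneg n ((mem_negAtoms L n).2 (by simpa [litNeg] using hmem)) hn
        | false =>
          exact (by simpa [satLit] using hl : n ∉ X)
            (hpos ((mem_posAtoms L n).2 (by simpa [litNeg] using hmem)))
      cases b with
      | true =>
        have hn : n ∈ X := by simpa [satLit] using hl
        exact ⟨(true, n), hlc, by simp [satLit, Finset.mem_erase, hn, hna]⟩
      | false =>
        have hn : n ∉ X := by simpa [satLit] using hl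
        exact ⟨(false, n), hlc, by simp [satLit, Finset.mem_erase]; exact fun _ => hn⟩
  · -- minimality
    intro M' hM' hM'mod
    obtain ⟨hM'sub, hM'ne⟩ := Finset.ssubset_iff_subset_ne.1 hM'
    have hex : ∃ a ∈ X \ posAtoms L, a ∉ M' := by
      by_contra h
      push_neg at h
      exact hM'ne (Finset.Subset.antisymm hM'sub h)
    obtain ⟨a, haX, haM'⟩ := hex
    rw [Finset.mem_sdiff] at haX
    set M : Finset ℕ := M' ∪ posAtoms L with hM
    have hMX : M ⊆ X := Finset.union_subset (hM'sub.trans (Finset.sdiff_subset)) hpos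
    have hMss : M ⊂ X := by
      refine Finset.ssubset_iff_subset_ne.2 ⟨hMX, fun h => ?_⟩
      have : a ∈ M := h ▸ haX.1
      rw [hM, Finset.mem_union] at this
      rcases this with h1 | h1
      · exact haM' h1
      · exact haX.2 h1
    apply hminimal M hMss
    intro c hcT
    by_cases hcL : ∃ m ∈ c, m ∈ L
    · obtain ⟨⟨b, n⟩, hmc, hmL⟩ := hcL
      cases b with
      | true =>
        exact ⟨(true, n), hmc, by
          simp only [satLit, if_true]
          exact Finset.mem_union_right _ ((mem_posAtoms L n).2 hmL)⟩
      | false =>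
        have hn1 : n ∉ X := hneg n ((mem_negAtoms L n).2 hmL)
        refine ⟨(false, n), hmc, ?_⟩
        simp only [satLit]
        intro h
        exact hn1 (hMX h)
    · push_neg at hcL
      have hcred : c \ negSet L ∈ reduceTh T L :=
        (mem_reduceTh T L _).2 ⟨c, hcT, hcL, rfl⟩
      obtain ⟨l, hlc, hl⟩ := hM'mod _ hcred
      rw [Finset.mem_sdiff] at hlc
      obtain ⟨b, n⟩ := l
      cases b with
      | true =>
        have hn : n ∈ M' := by simpa [satLit] using hl
        exact ⟨(true, n), hlc.1, by simp [satLit, hM]; exact Or.inl hn⟩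
      | false =>
        have hn : n ∉ M' := by simpa [satLit] using hl
        have hnL : n ∉ posAtoms L := fun h => by
          apply hlc.2
          rw [mem_negSet]
          simpa [litNeg] using (mem_posAtoms L n).1 h
        refine ⟨(false, n), hlc.1, ?_⟩
        simp only [satLit, hM, Finset.mem_union]
        rintro (h | h)
        · exact hn h
        · exact hnL h
end

section
/- Let T be a CNF theory, M ⊆ At(T), and L = {¬x : x ∈ At(T) \ M}. Then M is a minimal model of T if and only if M is a model of T and, for every atom a ∈ M, the CNF theory T_L ∪ {{¬a}} is unsatisfiable (has no model). -/
open Classical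

lemma atom_mem_thAtoms {T : CTheory} {c : Clause} {l : Lit} (hc : c ∈ T) (hl : l ∈ c) :
    l.2 ∈ thAtoms T :=
  Finset.le_sup (f := clauseAtoms) hc (Finset.mem_image_of_mem Prod.snd hl)

/-- Let `T` be a CNF theory, `M ⊆ At(T)`, and `L = {¬x : x ∈ At(T) \ M}`. Then `M` is a
minimal model of `T` iff `M` is a model of `T` and for every atom `a ∈ M` the CNF theory
`T_L ∪ {{¬a}}` is unsatisfiable. -/
theorem minModel_iff_unsat (T : CTheory) (hok : ∀ c ∈ T, Clause.ok c)
    (M : Finset ℕ) (hM : M ⊆ thAtoms T) :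
    isMinModel M T ↔
      (isModel M T ∧ ∀ a ∈ M,
        ¬ ∃ N : Finset ℕ, isModel N
          (insert ({((false, a) : Lit)} : Clause)
            (reduceTh T ((thAtoms T \ M).image (fun x => ((false, x) : Lit)))))) := by
  set L : Finset Lit := (thAtoms T \ M).image (fun x => ((false, x) : Lit)) with hLdef
  have hmemL : ∀ l : Lit, l ∈ L ↔ l.1 = false ∧ l.2 ∈ thAtoms T ∧ l.2 ∉ M := by
    intro l
    simp only [hLdef, Finset.mem_image, Finset.mem_sdiff]
    constructor
    · rintro ⟨x, hx, rfl⟩; exact ⟨rfl, hx.1, hx.2⟩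
    · rintro ⟨h1, h2, h3⟩
      exact ⟨l.2, ⟨h2, h3⟩, by cases l with | mk b n => simp at h1; simp [h1]⟩
  have hmemNL : ∀ l : Lit, l ∈ negSet L ↔ l.1 = true ∧ l.2 ∈ thAtoms T ∧ l.2 ∉ M := by
    intro l
    simp only [negSet, Finset.mem_image]
    constructor
    · rintro ⟨m, hm, rfl⟩
      rcases (hmemL m).mp hm with ⟨h1, h2, h3⟩
      exact ⟨by simp [litNeg, h1], h2, h3⟩
    · rintro ⟨h1, h2, h3⟩
      refine ⟨(false, l.2), (hmemL _).mpr ⟨rfl, h2, h3⟩, ?_⟩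
      cases l with | mk b n => simp at h1; simp [litNeg, h1]
  constructor
  · rintro ⟨hmod, -, hmin⟩
    refine ⟨hmod, ?_⟩
    rintro a ha ⟨N, hN⟩
    apply hmin (N ∩ M) ?_ ?_
    · constructor
      · exact Finset.inter_subset_right
      · intro hsub
        obtain ⟨l, hl, hsat⟩ := hN _ (Finset.mem_insert_self _ _)
        simp only [Finset.mem_singleton] at hl; subst hl
        simp [satLit] at hsat
        exact hsat (Finset.mem_inter.mp (hsub ha)).1
    · intro c hc
      by_cases hcl : ∀ l ∈ c, l ∉ L
      · have hcin : (c \ negSet L) ∈ reduceTh T L := by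
          simp only [reduceTh, Finset.mem_image, Finset.mem_filter]
          exact ⟨c, ⟨hc, hcl⟩, rfl⟩
        obtain ⟨l, hl, hsat⟩ := hN _ (Finset.mem_insert_of_mem hcin)
        have hlc := (Finset.mem_sdiff.mp hl).1
        have hln := (Finset.mem_sdiff.mp hl).2
        refine ⟨l, hlc, ?_⟩
        cases l with
        | mk b n =>
          cases b
          · simp [satLit] at hsat
            simp [satLit, Finset.mem_inter, hsat]
          · simp only [satLit, if_pos rfl] at hsat ⊢
            refine Finset.mem_inter.mpr ⟨hsat, ?_⟩
            by_contra hbM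
            exact hln ((hmemNL _).mpr ⟨rfl, atom_mem_thAtoms hc hlc, hbM⟩)
      · push_neg at hcl
        obtain ⟨l, hl, hlL⟩ := hcl
        rcases (hmemL l).mp hlL with ⟨h1, h2, h3⟩
        refine ⟨l, hl, ?_⟩
        simp only [satLit]
        rw [if_neg (by simp [h1])]
        intro hmem
        exact h3 (Finset.mem_inter.mp hmem).2
  · rintro ⟨hmod, hcond⟩
    refine ⟨hmod, hM, ?_⟩
    intro M' hss hmod'
    obtain ⟨a, haM, haM'⟩ := Finset.exists_of_ssubset hss
    have hsubM : M' ⊆ M := hss.subset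
    refine hcond a haM ⟨M', ?_⟩
    intro c hc
    rcases Finset.mem_insert.mp hc with rfl | hcr
    · exact ⟨_, Finset.mem_singleton_self _, by simpa [satLit] using haM'⟩
    · simp only [reduceTh, Finset.mem_image, Finset.mem_filter] at hcr
      obtain ⟨c0, ⟨hc0, -⟩, rfl⟩ := hcr
      obtain ⟨l, hl, hsat⟩ := hmod' c0 hc0
      refine ⟨l, Finset.mem_sdiff.mpr ⟨hl, ?_⟩, hsat⟩
      intro hln
      rcases (hmemNL l).mp hln with ⟨h1, -, h3⟩
      simp only [satLit, if_pos h1] at hsat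
      exact h3 (hsubM hsat)
end
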